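/- Let κ > 0, σ > 0, let φ : [0,1] → [0,1] be measurable, and let D be the open unit ball B(0,1) in ℝ². Define M_φ(r) := exp(−κ ∫₀^{|r|} s ds / ((1−s²)(1+σ φ(s)² s²))) for r ∈ D. Then for every r ∈ D: (1−|r|²)^{κ/2} ≤ M_φ(r) ≤ ((1−|r|²)/(1+σ|r|²))^{κ/(2(1+σ))}. In particular the cutoff weight M_φ is sandwiched between the FENE weight (1−|r|²)^{κ/2} and the corrected weight. -/

import Mathlib

open MeasureTheory Real

noncomputable section

abbrev E2 : Type := EuclideanSpace ℝ (Fin 2)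

/-- The cutoff weight `M_φ(r) = exp(-κ ∫₀^{|r|} s ds/((1-s²)(1+σφ(s)²s²)))` is
sandwiched between the FENE weight `(1-|r|²)^{κ/2}` and the corrected weight
`((1-|r|²)/(1+σ|r|²))^{κ/(2(1+σ))}` on the open unit ball of ℝ². -/
theorem cutoff_weight_sandwich (κ σ : ℝ) (hκ : 0 < κ) (hσ : 0 < σ)
    (φ : ℝ → ℝ) (hφmeas : Measurable φ)
    (hφrange : ∀ s ∈ Set.Icc (0:ℝ) 1, φ s ∈ Set.Icc (0:ℝ) 1)
    (Mφ : E2 → ℝ)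
    (hMφ : ∀ r, Mφ r = Real.exp (-κ * ∫ s in (0:ℝ)..‖r‖,
      s / ((1 - s ^ 2) * (1 + σ * φ s ^ 2 * s ^ 2)))) :
    ∀ r ∈ Metric.ball (0 : E2) 1,
      (1 - ‖r‖ ^ 2) ^ (κ / 2) ≤ Mφ r ∧
      Mφ r ≤ ((1 - ‖r‖ ^ 2) / (1 + σ * ‖r‖ ^ 2)) ^ (κ / (2 * (1 + σ))) := by
  intro r hr
  have hR1 : ‖r‖ < 1 := by simpa using mem_ball_zero_iff.mp hr
  set R := ‖r‖ with hRdef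
  have hR0 : (0:ℝ) ≤ R := norm_nonneg r
  have hR2 : R ^ 2 < 1 := by nlinarith
  have h1R2 : (0:ℝ) < 1 - R ^ 2 := by linarith
  have h1σ : (0:ℝ) < 1 + σ := by linarith
  have hσR : (0:ℝ) < 1 + σ * R ^ 2 := by nlinarith
  set f : ℝ → ℝ := fun s => s / ((1 - s ^ 2) * (1 + σ * φ s ^ 2 * s ^ 2)) with hf
  set g : ℝ → ℝ := fun s => s / (1 - s ^ 2) with hg
  set h : ℝ → ℝ := fun s => s / ((1 - s ^ 2) * (1 + σ * s ^ 2)) with hh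
  -- basic denominator facts on [0,R]
  have hs2 : ∀ s ∈ Set.Icc (0:ℝ) R, (0:ℝ) < 1 - s ^ 2 := by
    intro s hs
    nlinarith [hs.1, hs.2]
  have hs2' : ∀ s ∈ Set.Icc (0:ℝ) R, 1 - R ^ 2 ≤ 1 - s ^ 2 := by
    intro s hs
    nlinarith [hs.1, hs.2]
  have hφden : ∀ s ∈ Set.Icc (0:ℝ) R,
      1 ≤ 1 + σ * φ s ^ 2 * s ^ 2 ∧ 1 + σ * φ s ^ 2 * s ^ 2 ≤ 1 + σ * s ^ 2 := by
    intro s hs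
    have hs1 : s ∈ Set.Icc (0:ℝ) 1 := ⟨hs.1, le_trans hs.2 hR1.le⟩
    have hφs := hφrange s hs1
    have hφ2 : φ s ^ 2 ≤ 1 := by nlinarith [hφs.1, hφs.2]
    constructor
    · nlinarith [mul_nonneg (mul_nonneg hσ.le (sq_nonneg (φ s))) (sq_nonneg s)]
    · nlinarith [mul_nonneg (mul_nonneg hσ.le (sq_nonneg s)) (sub_nonneg.mpr hφ2)]
  -- interval integrability of the three functions
  have hcg : ContinuousOn g (Set.uIcc (0:ℝ) R) := by
    rw [Set.uIcc_of_le hR0]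
    exact ContinuousOn.div continuousOn_id (by fun_prop) fun x hx => (hs2 x hx).ne'
  have hch : ContinuousOn h (Set.uIcc (0:ℝ) R) := by
    rw [Set.uIcc_of_le hR0]
    refine ContinuousOn.div continuousOn_id (by fun_prop) fun x hx => ?_
    have h1 := hs2 x hx
    have h2 : (0:ℝ) < 1 + σ * x ^ 2 := by nlinarith [hx.1, hσ.le, sq_nonneg x]
    positivity
  have hint_g : IntervalIntegrable g volume 0 R := hcg.intervalIntegrable
  have hint_h : IntervalIntegrable h volume 0 R := hch.intervalIntegrable
  have hint_f : IntervalIntegrable f volume 0 R := by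
    rw [intervalIntegrable_iff, Set.uIoc_of_le hR0]
    have hfm : Measurable f := by
      rw [hf]
      exact measurable_id.div ((measurable_const.sub (measurable_id.pow_const 2)).mul
        (measurable_const.add ((measurable_const.mul (hφmeas.pow_const 2)).mul
          (measurable_id.pow_const 2))))
    refine Measure.integrableOn_of_bounded (M := R / (1 - R ^ 2)) measure_Ioc_lt_top.ne
      hfm.aestronglyMeasurable ?_
    · rw [ae_restrict_iff' measurableSet_Ioc]
      refine Filter.Eventually.of_forall fun s hs => ?_
      have hsI : s ∈ Set.Icc (0:ℝ) R := ⟨hs.1.le, hs.2⟩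
      have h1 := hs2 s hsI
      have h2 := (hφden s hsI).1
      have hden : (0:ℝ) < (1 - s ^ 2) * (1 + σ * φ s ^ 2 * s ^ 2) := by nlinarith
      have hfs : f s = s / ((1 - s ^ 2) * (1 + σ * φ s ^ 2 * s ^ 2)) := rfl
      rw [hfs, Real.norm_eq_abs, abs_of_nonneg (div_nonneg hsI.1 hden.le)]
      have hle : 1 - R ^ 2 ≤ (1 - s ^ 2) * (1 + σ * φ s ^ 2 * s ^ 2) := by
        nlinarith [hs2' s hsI]
      calc s / ((1 - s ^ 2) * (1 + σ * φ s ^ 2 * s ^ 2)) ≤ s / (1 - R ^ 2) := by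
            gcongr
            exact hsI.1
          _ ≤ R / (1 - R ^ 2) := by gcongr; exact hsI.2
  -- pointwise comparisons
  have hfg : ∀ s ∈ Set.Icc (0:ℝ) R, f s ≤ g s := by
    intro s hs
    have h1 := hs2 s hs
    have h2 := (hφden s hs).1
    show s / ((1 - s ^ 2) * (1 + σ * φ s ^ 2 * s ^ 2)) ≤ s / (1 - s ^ 2)
    gcongr
    · exact hs.1
    · nlinarith
  have hhf : ∀ s ∈ Set.Icc (0:ℝ) R, h s ≤ f s := by
    intro s hs
    have h1 := hs2 s hs
    have h2 := (hφden s hs).1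
    have h3 := (hφden s hs).2
    show s / ((1 - s ^ 2) * (1 + σ * s ^ 2)) ≤
        s / ((1 - s ^ 2) * (1 + σ * φ s ^ 2 * s ^ 2))
    gcongr <;> nlinarith [hs.1]
  -- FTC computations
  have hIg : ∫ s in (0:ℝ)..R, g s = -(1/2) * Real.log (1 - R ^ 2) := by
    have hF : ∀ x ∈ Set.uIcc (0:ℝ) R,
        HasDerivAt (fun s => -(1/2) * Real.log (1 - s ^ 2)) (g x) x := by
      intro x hx
      rw [Set.uIcc_of_le hR0] at hx
      have hx2 := hs2 x hx
      have h1 : HasDerivAt (fun s : ℝ => 1 - s ^ 2) (-(2 * x)) x := by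
        simpa using (hasDerivAt_pow 2 x).const_sub 1
      have h2 := (h1.log hx2.ne').const_mul (-(1/2) : ℝ)
      refine HasDerivAt.congr_deriv h2 (Eq.symm ?_)
      show x / (1 - x ^ 2) = _
      field_simp
    rw [intervalIntegral.integral_eq_sub_of_hasDerivAt hF hint_g]
    norm_num
  have hIh : ∫ s in (0:ℝ)..R, h s
      = (1 / (2 * (1 + σ))) * (Real.log (1 + σ * R ^ 2) - Real.log (1 - R ^ 2)) := by
    have hG : ∀ x ∈ Set.uIcc (0:ℝ) R,
        HasDerivAt (fun s => (1 / (2 * (1 + σ))) *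
          (Real.log (1 + σ * s ^ 2) - Real.log (1 - s ^ 2))) (h x) x := by
      intro x hx
      rw [Set.uIcc_of_le hR0] at hx
      have hx2 := hs2 x hx
      have hσx : (0:ℝ) < 1 + σ * x ^ 2 := by nlinarith [hx.1, hσ.le, sq_nonneg x]
      have ha : HasDerivAt (fun s : ℝ => 1 + σ * s ^ 2) (σ * (2 * x)) x := by
        simpa using ((hasDerivAt_pow 2 x).const_mul σ).const_add 1
      have hb : HasDerivAt (fun s : ℝ => 1 - s ^ 2) (-(2 * x)) x := by
        simpa using (hasDerivAt_pow 2 x).const_sub 1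
      have h2 := ((ha.log hσx.ne').sub (hb.log hx2.ne')).const_mul (1 / (2 * (1 + σ)) : ℝ)
      refine HasDerivAt.congr_deriv h2 (Eq.symm ?_)
      show x / ((1 - x ^ 2) * (1 + σ * x ^ 2)) = _
      field_simp
      ring
    rw [intervalIntegral.integral_eq_sub_of_hasDerivAt hG hint_h]
    norm_num
  -- integral comparisons
  set I : ℝ := ∫ s in (0:ℝ)..R, f s with hI
  have hImono1 : I ≤ -(1/2) * Real.log (1 - R ^ 2) := by
    rw [← hIg]
    exact intervalIntegral.integral_mono_on hR0 hint_f hint_g hfg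
  have hImono2 :
      (1 / (2 * (1 + σ))) * (Real.log (1 + σ * R ^ 2) - Real.log (1 - R ^ 2)) ≤ I := by
    rw [← hIh]
    exact intervalIntegral.integral_mono_on hR0 hint_h hint_f hhf
  have hMr : Mφ r = Real.exp (-κ * I) := hMφ r
  constructor
  · rw [hMr, Real.rpow_def_of_pos h1R2]
    apply Real.exp_le_exp.mpr
    nlinarith [mul_le_mul_of_nonneg_left hImono1 hκ.le]
  · rw [hMr, Real.rpow_def_of_pos (div_pos h1R2 hσR), Real.log_div h1R2.ne' hσR.ne']
    apply Real.exp_le_exp.mpr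
    have key := mul_le_mul_of_nonneg_left hImono2 hκ.le
    have h2σ : (2 * (1 + σ)) ≠ 0 := by positivity
    have hrw : κ / (2 * (1 + σ)) = κ * (1 / (2 * (1 + σ))) := by ring
    rw [hrw]
    nlinarith [key]
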